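/- Let (R, m) be a commutative local ring, I an ideal of R with I ≠ R, f ∈ R, and S = S(f) the pseudocanonical cover of R via f, with m_S = {a + b·t : a ∈ m, b ∈ I}. Let x₁, …, x_d ∈ m, let J = (x₁, …, x_d)R, and let u ∈ I be such that: (i) m·u ⊆ J·I; (ii) every b ∈ I with m·b ⊆ J·I satisfies b ∈ R·u + J·I; and (iii) every a ∈ R with a·I ⊆ J·I satisfies a ∈ J. Then u·t generates the socle of S modulo JS: one has m_S·(u·t) ⊆ JS, and every s ∈ S with m_S·s ⊆ JS satisfies s ∈ JS + R·(u·t). -/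

import Mathlib

open Polynomial

/-- The set `{a + b·t : a ∈ R, b ∈ I}` inside `A = R[T]/(T² − f)`. -/
def pccSet {R : Type*} [CommRing R] (I : Ideal R) (f : R) :
    Set (AdjoinRoot (X ^ 2 - C f)) :=
  {x | ∃ a b : R, b ∈ I ∧
    x = algebraMap R (AdjoinRoot (X ^ 2 - C f)) a +
        algebraMap R (AdjoinRoot (X ^ 2 - C f)) b * AdjoinRoot.root (X ^ 2 - C f)}

/-- The pseudocanonical cover `S(f) = R + It` of `R` via `f`, as a subring of
`A = R[T]/(T² − f)`. -/
noncomputable def pcc {R : Type*} [CommRing R] (I : Ideal R) (f : R) :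
    Subring (AdjoinRoot (X ^ 2 - C f)) where
  carrier := pccSet I f
  one_mem' := ⟨1, 0, I.zero_mem, by simp⟩
  zero_mem' := ⟨0, 0, I.zero_mem, by simp⟩
  add_mem' := by
    rintro x y ⟨a, b, hb, rfl⟩ ⟨c, d, hd, rfl⟩
    exact ⟨a + c, b + d, I.add_mem hb hd, by simp only [map_add]; ring⟩
  neg_mem' := by
    rintro x ⟨a, b, hb, rfl⟩
    exact ⟨-a, -b, I.neg_mem hb, by simp only [map_neg]; ring⟩
  mul_mem' := by
    rintro x y ⟨a, b, hb, rfl⟩ ⟨c, d, hd, rfl⟩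
    refine ⟨a * c + b * d * f, a * d + b * c, I.add_mem (I.mul_mem_left a hd) (I.mul_mem_right c hb), ?_⟩
    have hroot : AdjoinRoot.root (X ^ 2 - C f) ^ 2 =
        algebraMap R (AdjoinRoot (X ^ 2 - C f)) f := by
      have h := AdjoinRoot.eval₂_root (X ^ 2 - C f)
      simp only [eval₂_sub, eval₂_pow, eval₂_X, eval₂_C, sub_eq_zero] at h
      exact h
    simp only [map_add, map_mul]
    linear_combination (algebraMap R (AdjoinRoot (X ^ 2 - C f)) b *
      algebraMap R (AdjoinRoot (X ^ 2 - C f)) d) * hroot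

/-- The canonical ring homomorphism `R → S(f)`. -/
noncomputable def toPcc {R : Type*} [CommRing R] (I : Ideal R) (f : R) :
    R →+* pcc I f :=
  (algebraMap R (AdjoinRoot (X ^ 2 - C f))).codRestrict (pcc I f)
    (fun a => ⟨a, 0, I.zero_mem, by simp⟩)

/-- The element `u·t` of `S(f)`, for `u ∈ I`. -/
noncomputable def utElem {R : Type*} [CommRing R] (I : Ideal R) (f : R) (u : R) (hu : u ∈ I) :
    pcc I f :=
  ⟨algebraMap R (AdjoinRoot (X ^ 2 - C f)) u * AdjoinRoot.root (X ^ 2 - C f),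
    0, u, hu, by simp⟩

/-- The set `m_S = {a + b·t : a ∈ m, b ∈ I}` inside `A = R[T]/(T² − f)`. -/
def mSSet {R : Type*} [CommRing R] (m I : Ideal R) (f : R) :
    Set (AdjoinRoot (X ^ 2 - C f)) :=
  {x | ∃ a b : R, a ∈ m ∧ b ∈ I ∧
    x = algebraMap R (AdjoinRoot (X ^ 2 - C f)) a +
        algebraMap R (AdjoinRoot (X ^ 2 - C f)) b * AdjoinRoot.root (X ^ 2 - C f)}


lemma pcc_root_sq {R : Type*} [CommRing R] (f : R) :
    AdjoinRoot.root (X ^ 2 - C f) ^ 2 = algebraMap R (AdjoinRoot (X ^ 2 - C f)) f := by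
  have h := AdjoinRoot.eval₂_root (X ^ 2 - C f)
  simp only [eval₂_sub, eval₂_pow, eval₂_X, eval₂_C, sub_eq_zero] at h
  exact h

lemma pcc_mul_val {R : Type*} [CommRing R] (f a b c e : R) :
    (algebraMap R (AdjoinRoot (X ^ 2 - C f)) a +
      algebraMap R (AdjoinRoot (X ^ 2 - C f)) b * AdjoinRoot.root (X ^ 2 - C f)) *
    (algebraMap R (AdjoinRoot (X ^ 2 - C f)) c +
      algebraMap R (AdjoinRoot (X ^ 2 - C f)) e * AdjoinRoot.root (X ^ 2 - C f)) =
    algebraMap R (AdjoinRoot (X ^ 2 - C f)) (a * c + b * e * f) +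
      algebraMap R (AdjoinRoot (X ^ 2 - C f)) (a * e + b * c) *
        AdjoinRoot.root (X ^ 2 - C f) := by
  simp only [map_add, map_mul]
  linear_combination (algebraMap R (AdjoinRoot (X ^ 2 - C f)) b *
    algebraMap R (AdjoinRoot (X ^ 2 - C f)) e) * pcc_root_sq f

lemma pcc_repr_unique {R : Type*} [CommRing R] [Nontrivial R] {f a b c e : R}
    (h : algebraMap R (AdjoinRoot (X ^ 2 - C f)) a +
        algebraMap R (AdjoinRoot (X ^ 2 - C f)) b * AdjoinRoot.root (X ^ 2 - C f) =
      algebraMap R (AdjoinRoot (X ^ 2 - C f)) c +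
        algebraMap R (AdjoinRoot (X ^ 2 - C f)) e * AdjoinRoot.root (X ^ 2 - C f)) :
    a = c ∧ b = e := by
  have hmk : AdjoinRoot.mk (X ^ 2 - C f) (Polynomial.C (a - c) + Polynomial.C (b - e) * X) = 0 := by
    have h0 : algebraMap R (AdjoinRoot (X ^ 2 - C f)) (a - c) +
        algebraMap R (AdjoinRoot (X ^ 2 - C f)) (b - e) * AdjoinRoot.root (X ^ 2 - C f) = 0 := by
      simp only [map_sub]
      linear_combination h
    rw [AdjoinRoot.algebraMap_eq] at h0
    simpa [map_add, map_mul, AdjoinRoot.mk_X, AdjoinRoot.mk_C] using h0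
  have hdvd : (X ^ 2 - C f) ∣ (Polynomial.C (a - c) + Polynomial.C (b - e) * X) :=
    AdjoinRoot.mk_eq_zero.mp hmk
  have hm : (X ^ 2 - C f).Monic := monic_X_pow_sub_C f (by norm_num)
  have hz : (Polynomial.C (a - c) + Polynomial.C (b - e) * X) %ₘ (X ^ 2 - C f) = 0 :=
    (modByMonic_eq_zero_iff_dvd hm).mpr hdvd
  have hdeg : (Polynomial.C (a - c) + Polynomial.C (b - e) * X).degree < (X ^ 2 - C f).degree := by
    rw [degree_X_pow_sub_C (by norm_num) f]
    refine lt_of_le_of_lt ?_ (by norm_num : (1 : WithBot ℕ) < 2)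
    rw [add_comm]
    exact degree_linear_le
  have hself := (modByMonic_eq_self_iff hm).mpr hdeg
  rw [hz] at hself
  constructor
  · have := congrArg (fun q => Polynomial.coeff q 0) hself
    simpa [sub_eq_zero] using this.symm
  · have := congrArg (fun q => Polynomial.coeff q 1) hself
    simpa [sub_eq_zero] using this.symm

lemma toPcc_val {R : Type*} [CommRing R] (I : Ideal R) (f : R) (a : R) :
    ((toPcc I f a : pcc I f) : AdjoinRoot (X ^ 2 - C f)) =
      algebraMap R (AdjoinRoot (X ^ 2 - C f)) a := rfl

lemma utElem_val {R : Type*} [CommRing R] (I : Ideal R) (f : R) (u : R) (hu : u ∈ I) :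
    ((utElem I f u hu : pcc I f) : AdjoinRoot (X ^ 2 - C f)) =
      algebraMap R (AdjoinRoot (X ^ 2 - C f)) u * AdjoinRoot.root (X ^ 2 - C f) := rfl

lemma pcc_coe_mul {R : Type*} [CommRing R] {I : Ideal R} {f : R} (s t : pcc I f) :
    ((s * t : pcc I f) : AdjoinRoot (X ^ 2 - C f)) = (s : AdjoinRoot (X ^ 2 - C f)) * t := rfl

lemma pcc_coe_add {R : Type*} [CommRing R] {I : Ideal R} {f : R} (s t : pcc I f) :
    ((s + t : pcc I f) : AdjoinRoot (X ^ 2 - C f)) = (s : AdjoinRoot (X ^ 2 - C f)) + t := rfl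

/-- If `a ∈ J` and `b ∈ J·I` then `a + b·t ∈ JS`. -/
lemma mem_JS_of {R : Type*} [CommRing R] {I : Ideal R} {f : R} (J : Ideal R) {a b : R}
    (ha : a ∈ J) (hb : b ∈ J * I) (s : pcc I f)
    (hs : (s : AdjoinRoot (X ^ 2 - C f)) =
      algebraMap R (AdjoinRoot (X ^ 2 - C f)) a +
        algebraMap R (AdjoinRoot (X ^ 2 - C f)) b * AdjoinRoot.root (X ^ 2 - C f)) :
    s ∈ J.map (toPcc I f) := by
  have key : ∀ b' : R, b' ∈ J * I → b' ∈ I ∧ ∀ s' : pcc I f,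
      (s' : AdjoinRoot (X ^ 2 - C f)) =
        algebraMap R (AdjoinRoot (X ^ 2 - C f)) b' * AdjoinRoot.root (X ^ 2 - C f) →
      s' ∈ J.map (toPcc I f) := by
    intro b' hb'
    refine Submodule.mul_induction_on hb' ?_ ?_
    · intro j hj c hc
      refine ⟨I.mul_mem_left j hc, fun s' hs' => ?_⟩
      have he : s' = toPcc I f j * utElem I f c hc := by
        apply Subtype.ext
        rw [pcc_coe_mul, toPcc_val, utElem_val, hs', map_mul]
        ring
      rw [he]
      exact Ideal.mul_mem_right _ _ (Ideal.mem_map_of_mem _ hj)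
    · rintro p q ⟨hpI, hp⟩ ⟨hqI, hq⟩
      refine ⟨I.add_mem hpI hqI, fun s' hs' => ?_⟩
      have he : s' = utElem I f p hpI + utElem I f q hqI := by
        apply Subtype.ext
        rw [pcc_coe_add, utElem_val, utElem_val, hs', map_add]
        ring
      rw [he]
      exact Ideal.add_mem _ (hp _ rfl) (hq _ rfl)
  obtain ⟨hbI, hkey⟩ := key b hb
  have he : s = toPcc I f a + utElem I f b hbI := by
    apply Subtype.ext
    rw [pcc_coe_add, toPcc_val, utElem_val, hs]
  rw [he]
  exact Ideal.add_mem _ (Ideal.mem_map_of_mem _ ha) (hkey _ rfl)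

/-- Every element of `JS` has the form `a + b·t` with `a ∈ J`, `b ∈ J·I`. -/
lemma mem_JS_rep {R : Type*} [CommRing R] {I : Ideal R} {f : R} (J : Ideal R) {s : pcc I f}
    (hs : s ∈ J.map (toPcc I f)) :
    ∃ a ∈ J, ∃ b ∈ J * I, (s : AdjoinRoot (X ^ 2 - C f)) =
      algebraMap R (AdjoinRoot (X ^ 2 - C f)) a +
        algebraMap R (AdjoinRoot (X ^ 2 - C f)) b * AdjoinRoot.root (X ^ 2 - C f) := by
  refine Submodule.span_induction ?_ ?_ ?_ ?_ hs
  · rintro y ⟨j, hj, rfl⟩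
    exact ⟨j, hj, 0, (J * I).zero_mem, by rw [toPcc_val]; simp⟩
  · exact ⟨0, J.zero_mem, 0, (J * I).zero_mem, by simp⟩
  · rintro y z - - ⟨a, ha, b, hb, hy⟩ ⟨c, hc, e, he, hz⟩
    refine ⟨a + c, J.add_mem ha hc, b + e, (J * I).add_mem hb he, ?_⟩
    rw [pcc_coe_add, hy, hz, map_add, map_add]
    ring
  · rintro r y - ⟨a, ha, b, hb, hy⟩
    obtain ⟨p, q, hq, hval⟩ := r.2
    refine ⟨p * a + q * b * f, ?_, p * b + q * a, ?_, ?_⟩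
    · exact J.add_mem (J.mul_mem_left p ha)
        (J.mul_mem_right f (J.mul_mem_left q (Ideal.mul_le_left hb)))
    · refine (J * I).add_mem ((J * I).mul_mem_left p hb) ?_
      rw [mul_comm q a]
      exact Ideal.mul_mem_mul ha hq
    · rw [smul_eq_mul, pcc_coe_mul, hval, hy, pcc_mul_val]

/-- If `u ∈ I` generates the socle of `I/JI` (hypotheses (i), (ii))
and `I/JI` is faithful over `R/J` (hypothesis (iii)), then `u·t` generates the socle of
`S/JS`: `m_S·(u·t) ⊆ JS`, and every `s ∈ S` with `m_S·s ⊆ JS` lies in `JS + R·(u·t)`. -/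
theorem statement4 {R : Type*} [CommRing R] [IsLocalRing R]
    (I : Ideal R) (hI : I ≠ ⊤) (f : R) {d : ℕ} (x : Fin d → R)
    (hx : ∀ i, x i ∈ IsLocalRing.maximalIdeal R)
    (u : R) (hu : u ∈ I)
    (h1 : ∀ r ∈ IsLocalRing.maximalIdeal R, r * u ∈ Ideal.span (Set.range x) * I)
    (h2 : ∀ b ∈ I,
      (∀ r ∈ IsLocalRing.maximalIdeal R, r * b ∈ Ideal.span (Set.range x) * I) →
      b ∈ Ideal.span {u} + Ideal.span (Set.range x) * I)
    (h3 : ∀ a : R, (∀ b ∈ I, a * b ∈ Ideal.span (Set.range x) * I) →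
      a ∈ Ideal.span (Set.range x)) :
    (∀ s : pcc I f,
      (s : AdjoinRoot (X ^ 2 - C f)) ∈ mSSet (IsLocalRing.maximalIdeal R) I f →
      s * utElem I f u hu ∈ (Ideal.span (Set.range x)).map (toPcc I f)) ∧
    (∀ s : pcc I f,
      (∀ y : pcc I f,
        (y : AdjoinRoot (X ^ 2 - C f)) ∈ mSSet (IsLocalRing.maximalIdeal R) I f →
        y * s ∈ (Ideal.span (Set.range x)).map (toPcc I f)) →
      ∃ j ∈ (Ideal.span (Set.range x)).map (toPcc I f),
        ∃ r : R, s = j + toPcc I f r * utElem I f u hu) := by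
  classical
  set J : Ideal R := Ideal.span (Set.range x) with hJ
  have hIm : I ≤ IsLocalRing.maximalIdeal R := IsLocalRing.le_maximalIdeal hI
  constructor
  · -- Part 1: m_S · (u t) ⊆ JS
    rintro s ⟨a, b, ha, hb, hs⟩
    have hval : ((s * utElem I f u hu : pcc I f) : AdjoinRoot (X ^ 2 - C f)) =
        algebraMap R (AdjoinRoot (X ^ 2 - C f)) (b * u * f) +
          algebraMap R (AdjoinRoot (X ^ 2 - C f)) (a * u) * AdjoinRoot.root (X ^ 2 - C f) := by
      have h := pcc_mul_val f a b 0 u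
      rw [show a * 0 + b * u * f = b * u * f by ring, show a * u + b * 0 = a * u by ring] at h
      rw [pcc_coe_mul, utElem_val, hs, ← h, map_zero, zero_add]
    refine mem_JS_of J ?_ (h1 a ha) _ hval
    exact J.mul_mem_right f (Ideal.mul_le_left (h1 b (hIm hb)))
  · -- Part 2: socle of S/JS is generated by u t
    intro s hsoc
    obtain ⟨a, b, hbI, hs⟩ := s.2
    -- a ∈ J
    have haJ : a ∈ J := by
      apply h3
      intro c hc
      have hmem : ((utElem I f c hc : pcc I f) : AdjoinRoot (X ^ 2 - C f)) ∈
          mSSet (IsLocalRing.maximalIdeal R) I f :=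
        ⟨0, c, (IsLocalRing.maximalIdeal R).zero_mem, hc, by rw [utElem_val]; simp⟩
      obtain ⟨a', ha', b', hb', hval⟩ := mem_JS_rep J (hsoc (utElem I f c hc) hmem)
      have hcomp : ((utElem I f c hc * s : pcc I f) : AdjoinRoot (X ^ 2 - C f)) =
          algebraMap R (AdjoinRoot (X ^ 2 - C f)) (c * b * f) +
            algebraMap R (AdjoinRoot (X ^ 2 - C f)) (c * a) *
              AdjoinRoot.root (X ^ 2 - C f) := by
        have h := pcc_mul_val f 0 c a b
        rw [show (0 : R) * a + c * b * f = c * b * f by ring,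
          show (0 : R) * b + c * a = c * a by ring] at h
        rw [pcc_coe_mul, utElem_val, hs, ← h, map_zero, zero_add]
      rw [hcomp] at hval
      obtain ⟨-, h2'⟩ := pcc_repr_unique hval
      rw [mul_comm a c, h2']
      exact hb'
    -- socle condition on b
    have hbs : ∀ r ∈ IsLocalRing.maximalIdeal R, r * b ∈ J * I := by
      intro r hr
      have hmem : ((toPcc I f r : pcc I f) : AdjoinRoot (X ^ 2 - C f)) ∈
          mSSet (IsLocalRing.maximalIdeal R) I f :=
        ⟨r, 0, hr, I.zero_mem, by rw [toPcc_val]; simp⟩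
      obtain ⟨a', ha', b', hb', hval⟩ := mem_JS_rep J (hsoc (toPcc I f r) hmem)
      have hcomp : ((toPcc I f r * s : pcc I f) : AdjoinRoot (X ^ 2 - C f)) =
          algebraMap R (AdjoinRoot (X ^ 2 - C f)) (r * a) +
            algebraMap R (AdjoinRoot (X ^ 2 - C f)) (r * b) *
              AdjoinRoot.root (X ^ 2 - C f) := by
        have h := pcc_mul_val f r 0 a b
        rw [show r * a + 0 * b * f = r * a by ring, show r * b + 0 * a = r * b by ring] at h
        rw [pcc_coe_mul, toPcc_val, hs, ← h, map_zero, zero_mul, add_zero]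
      rw [hcomp] at hval
      obtain ⟨-, h2'⟩ := pcc_repr_unique hval
      rw [h2']
      exact hb'
    have hb2 := h2 b hbI hbs
    rw [Ideal.add_eq_sup, Submodule.mem_sup] at hb2
    obtain ⟨y, hy, z, hz, hyz⟩ := hb2
    obtain ⟨r₀, hr₀⟩ := Ideal.mem_span_singleton'.mp hy
    have hzI : z ∈ I := Ideal.mul_le_right hz
    refine ⟨⟨algebraMap R (AdjoinRoot (X ^ 2 - C f)) a +
        algebraMap R (AdjoinRoot (X ^ 2 - C f)) z * AdjoinRoot.root (X ^ 2 - C f),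
        a, z, hzI, rfl⟩, mem_JS_of J haJ hz _ rfl, r₀, ?_⟩
    apply Subtype.ext
    rw [pcc_coe_add, pcc_coe_mul, toPcc_val, utElem_val, hs]
    have : b = r₀ * u + z := by rw [hr₀, hyz]
    rw [this, map_add, map_mul]
    ring
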